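/- Suppose P ∈ (0,1/2) and Δv = V_max/T for an integer T ≥ 1. Let μ = Σ_{j=1}^{N} f_j · δ_{v_j} be a weak stationary solution of the δ model with 0 = v_1 < v_2 < … < v_N ≤ V_max, f_j > 0 for every j, and Σ_{j=1}^{N} f_j = ρ. Then N = T+1 and v_j = (j−1)·Δv for every j = 1,…,N; that is, the atoms of any such equilibrium are located exactly at the quantized velocities 0, Δv, 2Δv, …, V_max spaced by multiples of the acceleration parameter Δv. -/

import Mathlib

open MeasureTheory

/-- The δ-model transition kernel: for pre-interaction speeds `vs` (candidate) and
`vf` (field), the probability measure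
`A_δ(vs,vf) = (1−P)·δ_{min(vs,vf)} + P·δ_{min(vs+Δv, Vmax)}`. -/
noncomputable def deltaKernel (Vmax Δv P : ℝ) (vs vf : ℝ) : Measure ℝ :=
  ENNReal.ofReal (1 - P) • Measure.dirac (min vs vf)
    + ENNReal.ofReal P • Measure.dirac (min (vs + Δv) Vmax)

/-- `μ` is a weak stationary solution of the δ model: for every continuous test
function `φ`, `∫∫ (∫ φ dA_δ(v_*,v^*)) dμ(v_*) dμ(v^*) = ρ ∫ φ dμ`. -/
def IsWeakStationaryDelta (Vmax Δv ρ P : ℝ) (μ : Measure ℝ) : Prop :=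
  ∀ φ : ℝ → ℝ, Continuous φ →
    (∫ vf, ∫ vs, (∫ v, φ v ∂(deltaKernel Vmax Δv P vs vf)) ∂μ ∂μ) = ρ * ∫ v, φ v ∂μ

/-- Suppose `P ∈ (0,1/2)` and `Δv = Vmax/T` with `T ≥ 1` an integer.  If
`μ = Σ_{j} f_j δ_{v_j}` is a weak stationary solution of the δ model with
`0 = v_1 < v_2 < ⋯ < v_N ≤ Vmax`, `f_j > 0` for every `j` and `Σ_j f_j = ρ`,
then `N = T+1` and `v_j = (j−1)·Δv` for every `j`: the atoms are located exactly
at the quantized velocities `0, Δv, 2Δv, …, Vmax`. -/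

lemma integrable_dirac' (g : ℝ → ℝ) (hg : Continuous g) (a : ℝ) :
    Integrable g (Measure.dirac a) := by
  refine ⟨hg.aestronglyMeasurable, ?_⟩
  rw [HasFiniteIntegral, lintegral_dirac]
  exact ENNReal.coe_lt_top

lemma integral_atomic {N : ℕ} (f v : Fin N → ℝ) (hf : ∀ j, 0 ≤ f j)
    (g : ℝ → ℝ) (hg : Continuous g) :
    ∫ x, g x ∂(∑ j, ENNReal.ofReal (f j) • Measure.dirac (v j)) = ∑ j, f j * g (v j) := by
  rw [integral_finset_sum_measure]
  · refine Finset.sum_congr rfl fun j _ => ?_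
    rw [integral_smul_measure, integral_dirac]
    simp [ENNReal.toReal_ofReal (hf j), smul_eq_mul]
  · intro j _
    exact (integrable_dirac' g hg (v j)).smul_measure ENNReal.ofReal_ne_top

lemma integral_kernel (Vmax Δv P : ℝ) (hP0 : 0 ≤ P) (hP1 : P ≤ 1) (vs vf : ℝ)
    (g : ℝ → ℝ) (hg : Continuous g) :
    ∫ x, g x ∂(deltaKernel Vmax Δv P vs vf)
      = (1 - P) * g (min vs vf) + P * g (min (vs + Δv) Vmax) := by
  rw [deltaKernel, integral_add_measure
      ((integrable_dirac' g hg _).smul_measure ENNReal.ofReal_ne_top)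
      ((integrable_dirac' g hg _).smul_measure ENNReal.ofReal_ne_top),
    integral_smul_measure, integral_smul_measure, integral_dirac, integral_dirac]
  simp [ENNReal.toReal_ofReal, hP0, sub_nonneg.2 hP1, smul_eq_mul]


lemma exists_bump (x : ℝ) (S : Finset ℝ) :
    ∃ φ : ℝ → ℝ, Continuous φ ∧ (∀ y, 0 ≤ φ y) ∧ φ x = 1 ∧ ∀ y ∈ S, y ≠ x → φ y = 0 := by
  classical
  set S' := (S.erase x).image (fun y => |y - x|) with hS'
  set ε : ℝ := if h : S'.Nonempty then S'.min' h else 1 with hε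
  have hεpos : 0 < ε := by
    rw [hε]
    split_ifs with h
    · have hm := S'.min'_mem h
      rw [Finset.mem_image] at hm
      obtain ⟨y, hy, hyx⟩ := hm
      have hne : y ≠ x := Finset.ne_of_mem_erase hy
      calc (0:ℝ) < |y - x| := abs_pos.2 (sub_ne_zero.2 hne)
      _ = S'.min' h := hyx
    · norm_num
  have hεle : ∀ y ∈ S, y ≠ x → ε ≤ |y - x| := by
    intro y hy hyx
    have hmem : |y - x| ∈ S' := Finset.mem_image.2 ⟨y, Finset.mem_erase.2 ⟨hyx, hy⟩, rfl⟩
    rw [hε]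
    rw [dif_pos ⟨_, hmem⟩]
    exact Finset.min'_le _ _ hmem
  refine ⟨fun y => max 0 (1 - |y - x| / ε), ?_, ?_, ?_, ?_⟩
  · fun_prop
  · intro y; exact le_max_left _ _
  · simp
  · intro y hy hyx
    have h1 : 1 - |y - x| / ε ≤ 0 := by
      have := hεle y hy hyx
      have h2 : (1:ℝ) ≤ |y - x| / ε := (one_le_div hεpos).2 this
      linarith
    simp [max_eq_left h1]

theorem statement3 (Vmax Δv ρ P : ℝ) (T : ℕ) (hT : 1 ≤ T)
    (hV : 0 < Vmax) (hρ : 0 < ρ) (hP0 : 0 < P) (hP : P < 1 / 2)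
    (hΔv : Δv = Vmax / (T : ℝ))
    (N : ℕ) (hN : 0 < N) (v f : Fin N → ℝ)
    (hv0 : v ⟨0, hN⟩ = 0) (hmono : StrictMono v) (hvle : ∀ j, v j ≤ Vmax)
    (hf : ∀ j, 0 < f j) (hmass : ∑ j, f j = ρ)
    (hstat : IsWeakStationaryDelta Vmax Δv ρ P
      (∑ j, ENNReal.ofReal (f j) • Measure.dirac (v j))) :
    N = T + 1 ∧ ∀ j : Fin N, v j = (j : ℕ) * Δv := by
  classical
  have hfle : ∀ j, 0 ≤ f j := fun j => (hf j).le
  have hP1 : P ≤ 1 := by linarith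
  have hTpos : (0:ℝ) < (T:ℝ) := by exact_mod_cast hT
  have hΔpos : 0 < Δv := by rw [hΔv]; positivity
  have hTv : (T:ℝ) * Δv = Vmax := by rw [hΔv]; field_simp
  set μ : Measure ℝ := ∑ j, ENNReal.ofReal (f j) • Measure.dirac (v j) with hμ
  set w : Fin N → ℝ := fun i => min (v i + Δv) Vmax with hwdef
  -- the key discrete identity
  have key : ∀ φ : ℝ → ℝ, Continuous φ →
      ∑ j, f j * (∑ i, f i * ((1-P) * φ (min (v i) (v j)) + P * φ (w i)))
        = ρ * ∑ j, f j * φ (v j) := by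
    intro φ hφ
    have hs := hstat φ hφ
    have h1 : ∀ vf : ℝ, (∫ vs, (∫ x, φ x ∂(deltaKernel Vmax Δv P vs vf)) ∂μ)
        = ∑ i, f i * ((1-P) * φ (min (v i) vf) + P * φ (w i)) := by
      intro vf
      have e1 : (∫ vs, (∫ x, φ x ∂(deltaKernel Vmax Δv P vs vf)) ∂μ)
          = ∫ vs, ((1-P) * φ (min vs vf) + P * φ (min (vs + Δv) Vmax)) ∂μ :=
        integral_congr_ae (Filter.Eventually.of_forall fun vs =>
          integral_kernel Vmax Δv P hP0.le hP1 vs vf φ hφ)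
      rw [e1, hμ, integral_atomic f v hfle _ (by fun_prop)]
    have h2 : (∫ vf, (∫ vs, (∫ x, φ x ∂(deltaKernel Vmax Δv P vs vf)) ∂μ) ∂μ)
        = ∑ j, f j * (∑ i, f i * ((1-P) * φ (min (v i) (v j)) + P * φ (w i))) := by
      have e1 : (∫ vf, (∫ vs, (∫ x, φ x ∂(deltaKernel Vmax Δv P vs vf)) ∂μ) ∂μ)
          = ∫ vf, (∑ i, f i * ((1-P) * φ (min (v i) vf) + P * φ (w i))) ∂μ :=
        integral_congr_ae (Filter.Eventually.of_forall h1)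
      rw [e1, hμ, integral_atomic f v hfle _ ?_]
      exact continuous_finset_sum _ fun i _ => by fun_prop
    rw [h2] at hs
    rw [hs, hμ, integral_atomic f v hfle φ hφ]
  -- support: every w i is an atom location
  have ha : ∀ i, ∃ k, v k = w i := by
    intro i
    by_contra hcon
    push_neg at hcon
    obtain ⟨φ, hφc, hφ0, hφ1, hφz⟩ := exists_bump (w i) (Finset.image v Finset.univ)
    have hkey := key φ hφc
    have hφv : ∀ j, φ (v j) = 0 := fun j =>
      hφz _ (Finset.mem_image_of_mem v (Finset.mem_univ j)) (hcon j)
    have hterm : ∀ j i' : Fin N,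
        0 ≤ f i' * ((1-P) * φ (min (v i') (v j)) + P * φ (w i')) := by
      intro j i'
      have h1P : (0:ℝ) ≤ 1 - P := by linarith
      exact mul_nonneg (hfle i') (add_nonneg (mul_nonneg h1P (hφ0 _))
        (mul_nonneg hP0.le (hφ0 _)))
    have hlow : ∀ j, f i * P ≤
        ∑ i', f i' * ((1-P) * φ (min (v i') (v j)) + P * φ (w i')) := by
      intro j
      refine le_trans ?_ (Finset.single_le_sum (fun i' _ => hterm j i') (Finset.mem_univ i))
      have h0 := hφ0 (min (v i) (v j))
      have h1P : (0:ℝ) ≤ 1 - P := by linarith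
      rw [hφ1]
      nlinarith [mul_nonneg (hfle i) (mul_nonneg h1P h0)]
    have hbig : ρ * (f i * P) ≤
        ∑ j, f j * (∑ i', f i' * ((1-P) * φ (min (v i') (v j)) + P * φ (w i'))) := by
      rw [← hmass, Finset.sum_mul]
      exact Finset.sum_le_sum fun j _ =>
        mul_le_mul_of_nonneg_left (hlow j) (hfle j)
    rw [hkey] at hbig
    simp only [hφv, mul_zero, Finset.sum_const_zero] at hbig
    nlinarith [mul_pos (mul_pos hρ (hf i)) hP0]
  -- mass balance at atoms with no acceleration inflow
  have hbal : ∀ k : Fin N, (∀ i, w i ≠ v k) →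
      ρ = (1 - P) * (2 * (∑ i, if k ≤ i then f i else 0) - f k) := by
    intro k hk
    obtain ⟨φ, hφc, hφ0, hφ1, hφz⟩ := exists_bump (v k)
      ((Finset.image v Finset.univ) ∪ (Finset.image w Finset.univ))
    have hkey := key φ hφc
    set Sk : ℝ := ∑ i, if k ≤ i then f i else 0 with hSk
    have hφv : ∀ j, φ (v j) = if j = k then 1 else 0 := by
      intro j
      by_cases hj : j = k
      · simp [hj, hφ1]
      · rw [if_neg hj]
        exact hφz _ (Finset.mem_union_left _ (Finset.mem_image_of_mem v (Finset.mem_univ j)))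
          (fun h => hj (hmono.injective h))
    have hφw : ∀ i, φ (w i) = 0 := fun i =>
      hφz _ (Finset.mem_union_right _ (Finset.mem_image_of_mem w (Finset.mem_univ i))) (hk i)
    have hminv : ∀ i j : Fin N, min (v i) (v j) = v (min i j) := fun i j =>
      (hmono.monotone.map_min).symm
    have hin : ∀ j : Fin N, (∑ i, f i * ((1-P) * φ (min (v i) (v j)) + P * φ (w i)))
        = (1-P) * ((if j = k then Sk - f k else 0) + (if k ≤ j then f k else 0)) := by
      intro j
      have e1 : ∀ i : Fin N, f i * ((1-P) * φ (min (v i) (v j)) + P * φ (w i))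
          = (1-P) * (if min i j = k then f i else 0) := by
        intro i
        rw [hφw, hminv, hφv]
        by_cases h : min i j = k <;> simp [h] <;> ring
      rw [Finset.sum_congr rfl fun i _ => e1 i, ← Finset.mul_sum]
      congr 1
      by_cases hj : j = k
      · rw [if_pos hj, if_pos (le_of_eq hj.symm)]
        have e2 : ∀ i : Fin N, (if min i j = k then f i else 0)
            = (if k ≤ i then f i else 0) := by
          intro i
          have : min i j = k ↔ k ≤ i := by
            rw [hj]
            constructor
            · intro h; rw [← h]; exact min_le_left i k
            · intro h; exact min_eq_right h
          by_cases h : k ≤ i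
          · rw [if_pos (this.2 h), if_pos h]
          · rw [if_neg (fun hc => h (this.1 hc)), if_neg h]
        rw [Finset.sum_congr rfl fun i _ => e2 i, sub_add_cancel]
      · rw [if_neg hj]
        have hiff : ∀ i : Fin N, (min i j = k ↔ (i = k ∧ k ≤ j)) := by
          intro i
          constructor
          · intro h
            rcases min_cases i j with ⟨h1, h2⟩ | ⟨h1, h2⟩
            · rw [h1] at h; exact ⟨h, h ▸ h2⟩
            · rw [h1] at h; exact absurd h hj
          · rintro ⟨rfl, hk2⟩; exact min_eq_left hk2
        have e2 : ∀ i : Fin N, (if min i j = k then f i else 0)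
            = (if i = k then (if k ≤ j then f k else 0) else 0) := by
          intro i
          by_cases h1 : i = k
          · by_cases h2 : k ≤ j
            · rw [if_pos (by rw [h1]; exact min_eq_left h2), if_pos h1, if_pos h2, h1]
            · rw [if_neg (fun hm => h2 ((hiff i).1 hm).2), if_pos h1, if_neg h2]
          · rw [if_neg (fun hm => h1 ((hiff i).1 hm).1), if_neg h1]
        rw [Finset.sum_congr rfl fun i _ => e2 i, Finset.sum_ite_eq' Finset.univ k]
        simp
    have hLstep : (∑ j, f j * (∑ i, f i * ((1-P) * φ (min (v i) (v j)) + P * φ (w i))))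
        = ∑ j, f j * ((1-P) * ((if j = k then Sk - f k else 0) + (if k ≤ j then f k else 0))) :=
      Finset.sum_congr rfl fun j _ => by rw [hin j]
    have lhs_eq : (∑ j : Fin N, f j * ((1-P) * ((if j = k then Sk - f k else 0)
        + (if k ≤ j then f k else 0)))) = (1-P) * (f k * (2 * Sk - f k)) := by
      have e1 : ∀ j : Fin N, f j * ((1-P) * ((if j = k then Sk - f k else 0)
          + (if k ≤ j then f k else 0)))
          = (1-P) * ((if j = k then f k * (Sk - f k) else 0)
            + (if k ≤ j then f j else 0) * f k) := by
        intro j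
        by_cases hj : j = k <;> by_cases hkj : k ≤ j <;> simp [hj, hkj] <;> ring
      rw [Finset.sum_congr rfl fun j _ => e1 j, ← Finset.mul_sum]
      rw [Finset.sum_add_distrib, Finset.sum_ite_eq' Finset.univ k, ← Finset.sum_mul, ← hSk]
      simp only [Finset.mem_univ, if_pos]
      ring
    have hR : (∑ j, f j * φ (v j)) = f k := by
      have e : ∀ j : Fin N, f j * φ (v j) = if j = k then f k else 0 := by
        intro j
        rw [hφv j]
        by_cases hj : j = k <;> simp [hj]
      rw [Finset.sum_congr rfl fun j _ => e j, Finset.sum_ite_eq' Finset.univ k]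
      simp
    rw [hLstep, lhs_eq, hR] at hkey
    have h1 : (1 - P) * (2 * Sk - f k) * f k = ρ * f k := by linarith [hkey]
    exact (mul_right_cancel₀ (ne_of_gt (hf k)) h1).symm
  -- basic facts about the zero atom
  have hzero_le : ∀ i : Fin N, (⟨0, hN⟩ : Fin N) ≤ i := fun i => Fin.le_def.2 (Nat.zero_le _)
  have hv_nonneg : ∀ i, 0 ≤ v i := fun i => hv0 ▸ (hmono.monotone (hzero_le i))
  have hw0 : ∀ i, w i ≠ v ⟨0, hN⟩ := by
    intro i h
    have hpos : 0 < w i := by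
      simp only [hwdef]
      exact lt_min (by linarith [hv_nonneg i]) hV
    rw [h, hv0] at hpos
    exact lt_irrefl _ hpos
  have hS0 : (∑ i, if (⟨0, hN⟩ : Fin N) ≤ i then f i else 0) = ρ := by
    rw [← hmass]
    exact Finset.sum_congr rfl fun i _ => if_pos (hzero_le i)
  have hb0 : ρ = (1 - P) * (2 * ρ - f ⟨0, hN⟩) := by
    have := hbal ⟨0, hN⟩ hw0
    rwa [hS0] at this
  -- claim 1: every grid point is an atom
  have hgrid : ∀ m : ℕ, m ≤ T → ∃ i, v i = m * Δv := by
    intro m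
    induction m with
    | zero => intro _; exact ⟨⟨0, hN⟩, by rw [hv0]; simp⟩
    | succ m ih =>
      intro hm
      obtain ⟨i, hi⟩ := ih (Nat.le_of_succ_le hm)
      obtain ⟨k, hk⟩ := ha i
      refine ⟨k, ?_⟩
      rw [hk]
      simp only [hwdef]
      have h2 : ((m:ℝ) + 1) * Δv ≤ Vmax := by
        rw [← hTv]
        have hc : (m:ℝ) + 1 ≤ (T:ℝ) := by exact_mod_cast hm
        nlinarith
      have e : v i + Δv = ((m + 1 : ℕ) : ℝ) * Δv := by rw [hi]; push_cast; ring
      rw [e, min_eq_left (by push_cast; push_cast at h2; linarith)]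
  -- claim 2: every atom is a grid point
  have hback : ∀ n : ℕ, ∀ hn : n < N, ∃ m : ℕ, m ≤ T ∧ v ⟨n, hn⟩ = m * Δv := by
    intro n
    induction n using Nat.strong_induction_on with
    | _ n ih =>
      intro hn
      by_contra hcon
      push_neg at hcon
      have hk0 : v ⟨n, hn⟩ ≠ 0 := by
        intro h
        exact hcon 0 (Nat.zero_le T) (by rw [h]; simp)
      have hn0 : n ≠ 0 := by
        intro h
        apply hk0
        subst h
        exact hv0
      have hwk : ∀ i, w i ≠ v ⟨n, hn⟩ := by
        intro i hwi
        by_cases hcase : v i + Δv < Vmax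
        · have h1 : w i = v i + Δv := by simp only [hwdef]; exact min_eq_left hcase.le
          have hik : v i < v ⟨n, hn⟩ := by rw [← hwi, h1]; linarith
          have hik' : (i : Fin N) < ⟨n, hn⟩ := hmono.lt_iff_lt.1 hik
          obtain ⟨m, hm, hvm⟩ := ih i.val hik' i.isLt
          have hvm' : v i = m * Δv := by rw [← hvm]
          have hm1 : m + 1 ≤ T := by
            have hlt : v i + Δv < (T:ℝ) * Δv := by rw [hTv]; exact hcase
            rw [hvm'] at hlt
            have hlt2 : ((m:ℝ) + 1) * Δv < (T:ℝ) * Δv := by linarith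
            have hlt3 : (m:ℝ) + 1 < (T:ℝ) := (mul_lt_mul_iff_left₀ hΔpos).1 hlt2
            have : m + 1 < T := by exact_mod_cast hlt3
            omega
          exact hcon (m + 1) hm1 (by rw [← hwi, h1, hvm']; push_cast; ring)
        · have h1 : w i = Vmax := by simp only [hwdef]; exact min_eq_right (not_lt.1 hcase)
          exact hcon T le_rfl (by rw [← hwi, h1, ← hTv])
      have hb := hbal ⟨n, hn⟩ hwk
      have hkpos : (⟨0, hN⟩ : Fin N) < (⟨n, hn⟩ : Fin N) := by
        rw [Fin.lt_def]
        exact Nat.pos_of_ne_zero hn0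
      have hSkb : (∑ i, if (⟨n, hn⟩ : Fin N) ≤ i then f i else 0) + f ⟨0, hN⟩ ≤ ρ := by
        rw [← hmass]
        have e : ∀ i : Fin N, (if (⟨n, hn⟩ : Fin N) ≤ i then f i else 0)
            + (if i = ⟨0, hN⟩ then f ⟨0, hN⟩ else 0) ≤ f i := by
          intro i
          by_cases h1 : (⟨n, hn⟩ : Fin N) ≤ i
          · have hne : i ≠ ⟨0, hN⟩ := by
              intro h
              rw [h] at h1
              exact absurd (lt_of_lt_of_le hkpos h1) (lt_irrefl _)
            rw [if_pos h1, if_neg hne]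
            simp
          · rw [if_neg h1]
            by_cases h2 : i = ⟨0, hN⟩
            · rw [if_pos h2, h2]; simp
            · rw [if_neg h2]; simp [hfle i]
        calc (∑ i, if (⟨n, hn⟩ : Fin N) ≤ i then f i else 0) + f ⟨0, hN⟩
            = ∑ i, ((if (⟨n, hn⟩ : Fin N) ≤ i then f i else 0)
              + (if i = ⟨0, hN⟩ then f ⟨0, hN⟩ else 0)) := by
              rw [Finset.sum_add_distrib, Finset.sum_ite_eq' Finset.univ]
              simp
          _ ≤ ∑ i, f i := Finset.sum_le_sum fun i _ => e i
      have h1P : (0:ℝ) < 1 - P := by linarith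
      have hcanc : 2 * ρ - f ⟨0, hN⟩
          = 2 * (∑ i, if (⟨n, hn⟩ : Fin N) ≤ i then f i else 0) - f ⟨n, hn⟩ :=
        mul_left_cancel₀ (ne_of_gt h1P) (hb0.symm.trans hb)
      linarith [hf ⟨0, hN⟩, hf ⟨n, hn⟩, hSkb, hcanc]
  -- final assembly
  have hgrid2 : ∀ k : Fin N, ∃ m : ℕ, m ≤ T ∧ v k = m * Δv := by
    intro k
    obtain ⟨m, hm, hvm⟩ := hback k.val k.isLt
    exact ⟨m, hm, by rw [← hvm]⟩
  choose M hMT hMv using hgrid2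
  choose L hLv using hgrid
  have hML : ∀ m (h : m ≤ T), M (L m h) = m := by
    intro m h
    have e1 : (M (L m h) : ℝ) * Δv = (m : ℝ) * Δv := by rw [← hMv (L m h), hLv m h]
    have e2 := mul_right_cancel₀ (ne_of_gt hΔpos) e1
    exact_mod_cast e2
  have hMmono : ∀ i j : Fin N, i < j → M i < M j := by
    intro i j hij
    have e1 : (M i : ℝ) * Δv < (M j : ℝ) * Δv := by
      rw [← hMv i, ← hMv j]; exact hmono hij
    exact_mod_cast (mul_lt_mul_iff_left₀ hΔpos).1 e1
  have hle1 : ∀ n : ℕ, ∀ hn : n < N, n ≤ M ⟨n, hn⟩ := by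
    intro n
    induction n with
    | zero => intro hn; exact Nat.zero_le _
    | succ n ihn =>
      intro hn
      have hn' : n < N := Nat.lt_of_succ_lt hn
      have h1 := hMmono ⟨n, hn'⟩ ⟨n + 1, hn⟩ (by simp [Fin.lt_def])
      have h2 := ihn hn'
      omega
  have hLle : ∀ m (h : m ≤ T), (L m h).val ≤ m := by
    intro m h
    have h1 : (L m h).val ≤ M (L m h) := hle1 (L m h).val (L m h).isLt
    rw [hML m h] at h1
    exact h1
  have hle2 : ∀ m (h : m ≤ T), m ≤ (L m h).val := by
    intro m
    induction m with
    | zero => intro h; exact Nat.zero_le _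
    | succ m ihm =>
      intro h
      have h' : m ≤ T := Nat.le_of_succ_le h
      have hlt : L m h' < L (m + 1) h := by
        apply hmono.lt_iff_lt.1
        rw [hLv m h', hLv (m + 1) h]
        push_cast
        nlinarith [hΔpos]
      have h1 := ihm h'
      have h2 := Fin.lt_def.1 hlt
      omega
  have hLval : ∀ m (h : m ≤ T), (L m h).val = m :=
    fun m h => le_antisymm (hLle m h) (hle2 m h)
  have hMk : ∀ k : Fin N, M k = k.val := by
    intro k
    have h := hMT k
    have e : L (M k) h = k := hmono.injective (by rw [hLv (M k) h, hMv k])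
    have := hLval (M k) h
    rw [e] at this
    omega
  have hNT : N = T + 1 := by
    have h1 : T < N := by
      have e1 := hLval T le_rfl
      have e2 := (L T le_rfl).isLt
      omega
    have h2 : N - 1 ≤ T := by
      have hn : N - 1 < N := by omega
      have e1 := hMT ⟨N - 1, hn⟩
      have e2 := hMk ⟨N - 1, hn⟩
      simp only at e2
      omega
    omega
  refine ⟨hNT, fun j => ?_⟩
  rw [hMv j, hMk j]
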